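/- Let H be a connected r-uniform hypergraph admitting a consistent weighted incidence matrix B with ∑_{e: v∈e} B(v,e) ≥ 1 for all vertices v and ∏_{v∈e} B(v,e) ≤ α for all edges e, with strict inequality in at least one of these conditions at some vertex or edge. Then ρ(H) > (r−1)!·α^{−1/r}. -/

import Mathlib

open Finset

/-- Spectral radius of an `r`-uniform hypergraph with edge set `E`. -/
noncomputable def specRad (r : ℕ) {V : Type} [Fintype V] (E : Finset (Finset V)) : ℝ :=
  sSup {ρ : ℝ | ∃ x : V → ℝ, (∀ v, 0 ≤ x v) ∧ x ≠ 0 ∧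
    ρ = (Nat.factorial r : ℝ) * (∑ e ∈ E, ∏ v ∈ e, x v) / (∑ v, x v ^ r)}

/-- Two vertices are adjacent if some edge contains both. -/
def Step {V : Type} (E : Finset (Finset V)) (a b : V) : Prop := ∃ e ∈ E, a ∈ e ∧ b ∈ e

/-- A hypergraph is connected if every pair of vertices is joined by a walk. -/
def Conn {V : Type} (E : Finset (Finset V)) : Prop :=
  ∀ a b : V, Relation.ReflTransGen (Step E) a b

/-- A weighted incidence matrix is consistent if around every cycle
(closed walk with distinct vertices and edges) the product of ratios is 1. -/
def Consistent {V : Type} (E : Finset (Finset V)) (B : V → Finset V → ℝ) : Prop :=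
  ∀ (l : ℕ) (v : Fin (l + 1) → V) (e : Fin l → Finset V),
    v (Fin.last l) = v 0 →
    (∀ i : Fin l, e i ∈ E ∧ v i.castSucc ∈ e i ∧ v i.succ ∈ e i) →
    Function.Injective e →
    Function.Injective (fun i : Fin l => v i.castSucc) →
    ∏ i : Fin l, B (v i.succ) (e i) / B (v i.castSucc) (e i) = 1

section WalkAux

variable {n : ℕ} (E : Finset (Finset (Fin n))) (B : Fin n → Finset (Fin n) → ℝ)

/-- Walk predicate: `IsW E a L b` says `L` is a list of steps (edge, next vertex)
forming a walk from `a` to `b`. -/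
def IsW (a : Fin n) : List (Finset (Fin n) × Fin n) → Fin n → Prop
  | [], b => a = b
  | (e, c) :: L, b => e ∈ E ∧ a ∈ e ∧ c ∈ e ∧ IsW c L b

/-- Weight of a walk: product of `B prev e / B next e` over steps. -/
noncomputable def wtW (a : Fin n) : List (Finset (Fin n) × Fin n) → ℝ
  | [] => 1
  | (e, c) :: L => (B a e / B c e) * wtW c L

/-- End vertex of a walk (structurally). -/
def endW (a : Fin n) : List (Finset (Fin n) × Fin n) → Fin n
  | [] => a
  | (_, c) :: L => endW c L

/-- Vertex at position `i` along a walk. -/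
def vget (a : Fin n) : List (Finset (Fin n) × Fin n) → ℕ → Fin n
  | _, 0 => a
  | [], _ + 1 => a
  | (_, c) :: L, i + 1 => vget c L i

variable {E B}

@[simp] lemma wtW_nil (a : Fin n) : wtW B a [] = 1 := rfl

@[simp] lemma wtW_cons (a c : Fin n) (e : Finset (Fin n)) (L : List (Finset (Fin n) × Fin n)) :
    wtW B a ((e, c) :: L) = (B a e / B c e) * wtW B c L := rfl

@[simp] lemma vget_cons_succ (a c : Fin n) (e : Finset (Fin n))
    (L : List (Finset (Fin n) × Fin n)) (i : ℕ) :
    vget a ((e, c) :: L) (i + 1) = vget c L i := rfl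

lemma endW_append (a : Fin n) (L M : List (Finset (Fin n) × Fin n)) :
    endW (endW a L) M = endW a (L ++ M) := by
  induction L generalizing a with
  | nil => rfl
  | cons p L ih => cases p; simp [endW, ih]

lemma wtW_append (a : Fin n) (L M : List (Finset (Fin n) × Fin n)) :
    wtW B a (L ++ M) = wtW B a L * wtW B (endW a L) M := by
  induction L generalizing a with
  | nil => simp [wtW, endW]
  | cons p L ih => cases p; simp [wtW, endW, ih]; ring

lemma isW_append_iff (a b : Fin n) (L M : List (Finset (Fin n) × Fin n)) :
    IsW E a (L ++ M) b ↔ IsW E a L (endW a L) ∧ IsW E (endW a L) M b := by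
  induction L generalizing a with
  | nil => simp [IsW, endW]
  | cons p L ih => cases p; simp [IsW, endW, ih]; tauto

lemma endW_eq (a b : Fin n) (L : List (Finset (Fin n) × Fin n)) (h : IsW E a L b) :
    endW a L = b := by
  induction L generalizing a with
  | nil => exact h
  | cons p L ih => cases p; exact ih _ h.2.2.2

lemma vget_zero (a : Fin n) (L : List (Finset (Fin n) × Fin n)) : vget a L 0 = a := by
  cases L <;> rfl

lemma vget_prefix (a : Fin n) (L M : List (Finset (Fin n) × Fin n)) (t : ℕ)
    (ht : t ≤ L.length) : vget a (L ++ M) t = vget a L t := by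
  induction L generalizing a t with
  | nil =>
    simp only [List.length_nil, Nat.le_zero] at ht; subst ht; rw [vget_zero, vget_zero]
  | cons p L ih =>
    cases p
    cases t with
    | zero => rfl
    | succ t => exact ih _ _ (by simpa using ht)

lemma vget_append (a : Fin n) (L M : List (Finset (Fin n) × Fin n)) (t : ℕ) :
    vget a (L ++ M) (L.length + t) = vget (endW a L) M t := by
  induction L generalizing a with
  | nil => simp [endW]
  | cons p L ih => cases p; simpa [endW, Nat.succ_add] using ih _

lemma endW_eq_vget (a : Fin n) (L : List (Finset (Fin n) × Fin n)) :
    endW a L = vget a L L.length := by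
  induction L generalizing a with
  | nil => rfl
  | cons p L ih => cases p; exact ih _

lemma endW_take (a : Fin n) (L : List (Finset (Fin n) × Fin n)) (i : ℕ) (hi : i ≤ L.length) :
    endW a (L.take i) = vget a L i := by
  conv_rhs => rw [← List.take_append_drop i L]
  rw [vget_prefix _ _ _ _ (by simp [hi]), endW_eq_vget]
  congr 1
  simp [hi]

lemma wtW_pos (hBpos : ∀ v e, e ∈ E → v ∈ e → 0 < B v e)
    (a b : Fin n) (L : List (Finset (Fin n) × Fin n)) (h : IsW E a L b) : 0 < wtW B a L := by
  induction L generalizing a with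
  | nil => norm_num [wtW]
  | cons p L ih =>
    obtain ⟨e, c⟩ := p
    obtain ⟨he, ha, hc, hw⟩ := h
    exact mul_pos (div_pos (hBpos _ _ he ha) (hBpos _ _ he hc)) (ih _ hw)

lemma isW_get (a b : Fin n) (L : List (Finset (Fin n) × Fin n)) (h : IsW E a L b) :
    ∀ i : Fin L.length, (L.get i).1 ∈ E ∧ vget a L i ∈ (L.get i).1 ∧
      vget a L (i + 1) ∈ (L.get i).1 := by
  induction L generalizing a with
  | nil => exact fun i => absurd i.2 (by simp)
  | cons p L ih =>
    obtain ⟨e, c⟩ := p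
    obtain ⟨he, ha, hc, hw⟩ := h
    intro i
    rcases i with ⟨i, hi⟩
    cases i with
    | zero =>
      refine ⟨he, ha, ?_⟩
      simpa [vget_zero] using hc
    | succ i =>
      exact ih _ hw ⟨i, by simpa using hi⟩

lemma wtW_eq_prod (a : Fin n) (L : List (Finset (Fin n) × Fin n)) :
    wtW B a L = ∏ i : Fin L.length,
      B (vget a L i) (L.get i).1 / B (vget a L (i + 1)) (L.get i).1 := by
  induction L generalizing a with
  | nil => simp [wtW]
  | cons p L ih =>
    obtain ⟨e, c⟩ := p
    rw [wtW_cons, ih]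
    simp only [List.length_cons]
    rw [Fin.prod_univ_succ]
    congr 1
    · simp [vget_zero]

end WalkAux

section Closed

variable {n : ℕ} {E : Finset (Finset (Fin n))} {B : Fin n → Finset (Fin n) → ℝ}

lemma wtW_closed (hcons : Consistent E B) :
    ∀ (l : ℕ) (L : List (Finset (Fin n) × Fin n)) (a : Fin n),
      L.length = l → IsW E a L a → wtW B a L = 1 := by
  intro l
  induction l using Nat.strong_induction_on with
  | _ l IH =>
  intro L a hlen hw
  subst hlen
  by_cases hv : ∃ i j : Fin L.length, (i : ℕ) < (j : ℕ) ∧ vget a L i = vget a L j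
  · -- a repeated vertex among v_0 .. v_{l-1} : rotate and split
    obtain ⟨i, j, hij, heq⟩ := hv
    set k := (i : ℕ) with hk
    set m := (j : ℕ) with hm
    have hkm : k < m := hij
    have hml : m < L.length := j.2
    set L1 := L.take k with hL1
    set L2 := L.drop k with hL2
    have hL : L1 ++ L2 = L := List.take_append_drop k L
    set b := vget a L k with hb
    have hend1 : endW a L1 = b := endW_take a L k (by omega)
    rw [← hL] at hw
    rw [isW_append_iff, hend1] at hw
    obtain ⟨hw1, hw2⟩ := hw
    have hend2 : endW b L2 = a := endW_eq _ _ _ hw2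
    set M := L2 ++ L1 with hM
    have hwM : IsW E b M b := by
      rw [isW_append_iff, hend2]
      exact ⟨hw2, hw1⟩
    have hlen2 : L2.length = L.length - k := by simp [hL2]
    have hlen1 : L1.length = k := by simp [hL1]; omega
    have hMlen : M.length = L.length := by simp [hM]; omega
    set t := m - k with ht
    have htpos : 0 < t := by omega
    have htlt : t < L2.length := by omega
    have hvgt : vget b M t = b := by
      have h1 : vget b M t = vget b L2 t := vget_prefix _ _ _ _ (by omega)
      have h2 : vget a L (k + t) = vget (endW a L1) L2 t := by
        conv_lhs => rw [← hL]
        rw [← hlen1]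
        exact vget_append _ _ _ _
      rw [h1, ← hend1]
      rw [← h2]
      have : k + t = m := by omega
      rw [this, hend1]
      exact heq.symm
    set M1 := M.take t with hM1
    set M2 := M.drop t with hM2
    have hMM : M1 ++ M2 = M := List.take_append_drop t M
    have hendM1 : endW b M1 = b := by
      rw [hM1, endW_take b M t (by omega), hvgt]
    have hwM' := hwM
    rw [← hMM, isW_append_iff, hendM1] at hwM'
    obtain ⟨hwM1, hwM2⟩ := hwM'
    have hM1len : M1.length = t := by simp [hM1]; omega
    have hM2len : M2.length = M.length - t := by simp [hM2]
    have e1 : wtW B b M1 = 1 := IH M1.length (by omega) M1 b rfl hwM1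
    have e2 : wtW B b M2 = 1 := IH M2.length (by omega) M2 b rfl hwM2
    have hwtM : wtW B b M = 1 := by
      rw [← hMM, wtW_append, hendM1, e1, e2, one_mul]
    calc wtW B a L = wtW B a L1 * wtW B b L2 := by
          rw [← hL, wtW_append, hend1]
      _ = wtW B b L2 * wtW B a L1 := mul_comm _ _
      _ = wtW B b M := by rw [hM, wtW_append, hend2]
      _ = 1 := hwtM
  · by_cases hedge : ∃ i j : Fin L.length, (i : ℕ) < (j : ℕ) ∧ (L.get i).1 = (L.get j).1
    · -- a repeated edge, all vertices distinct: reroute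
      obtain ⟨i, j, hij, heq⟩ := hedge
      obtain ⟨k, hkl⟩ := i
      obtain ⟨m, hml⟩ := j
      simp only [] at hij heq
      have hkm : k < m := hij
      rcases hgk : L.get ⟨k, hkl⟩ with ⟨e, u⟩
      rcases hgm : L.get ⟨m, hml⟩ with ⟨e2, w⟩
      obtain rfl : e = e2 := by
        have h1 : (L.get ⟨k, hkl⟩).1 = e := by rw [hgk]
        have h2 : (L.get ⟨m, hml⟩).1 = e2 := by rw [hgm]
        rw [← h1, ← h2, heq]
      rw [List.get_eq_getElem] at hgk hgm
      set A := L.take k with hA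
      set Bm := (L.drop (k+1)).take (m - k - 1) with hBm
      set C := L.drop (m+1) with hC
      have hdk : L.drop k = (e, u) :: L.drop (k+1) := by
        rw [List.drop_eq_getElem_cons (by omega)]
        rw [show L[k]'(by omega) = (e, u) from hgk]
      have hdm : L.drop m = (e, w) :: C := by
        rw [List.drop_eq_getElem_cons (by omega)]
        rw [hC, show L[m]'(by omega) = (e, w) from hgm]
      have hdk1 : L.drop (k+1) = Bm ++ (e, w) :: C := by
        conv_lhs => rw [← List.take_append_drop (m - k - 1) (L.drop (k+1))]
        rw [← hBm, List.drop_drop]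
        have : k + 1 + (m - k - 1) = m := by omega
        rw [this, hdm]
      have hdecomp : L = A ++ (e, u) :: (Bm ++ (e, w) :: C) := by
        conv_lhs => rw [← List.take_append_drop k L]
        rw [← hA, hdk, hdk1]
      have hAlen : A.length = k := by simp [hA]; omega
      have hBmlen : Bm.length = m - k - 1 := by
        simp [hBm]; omega
      have hClen : C.length = L.length - (m + 1) := by simp [hC]
      set p := endW a A with hp
      have hw' := hw
      rw [hdecomp, isW_append_iff, ← hp] at hw'
      obtain ⟨hwA, hwrest⟩ := hw'
      obtain ⟨heE, hpe, hue, hwrest2⟩ := hwrest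
      set q := endW u Bm with hq
      rw [isW_append_iff, ← hq] at hwrest2
      obtain ⟨hwBm, hwrest3⟩ := hwrest2
      obtain ⟨_, hqe, hwe, hwC⟩ := hwrest3
      -- two shorter closed walks
      set W1 := Bm ++ [(e, u)] with hW1
      set W2 := A ++ (e, w) :: C with hW2
      have hwW1 : IsW E u W1 u := by
        rw [hW1, isW_append_iff, ← hq]
        exact ⟨hwBm, heE, hqe, hue, rfl⟩
      have hwW2 : IsW E a W2 a := by
        rw [hW2, isW_append_iff, ← hp]
        exact ⟨hwA, heE, hpe, hwe, hwC⟩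
      have hW1len : W1.length = m - k := by simp [hW1, hBmlen]; omega
      have hW2len : W2.length = L.length - (m - k) := by simp [hW2, hAlen, hClen]; omega
      have e1 : wtW B u W1 = 1 := IH W1.length (by omega) W1 u rfl hwW1
      have e2 : wtW B a W2 = 1 := IH W2.length (by omega) W2 a rfl hwW2
      have ew1 : wtW B u W1 = wtW B u Bm * (B q e / B u e) := by
        rw [hW1, wtW_append, ← hq, wtW_cons, wtW_nil, mul_one]
      have ew2 : wtW B a W2 = wtW B a A * ((B p e / B w e) * wtW B w C) := by
        rw [hW2, wtW_append, ← hp, wtW_cons]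
      have ewL : wtW B a L =
          wtW B a A * ((B p e / B u e) * (wtW B u Bm * ((B q e / B w e) * wtW B w C))) := by
        rw [hdecomp, wtW_append, ← hp, wtW_cons, wtW_append, ← hq, wtW_cons]
      have key : wtW B a L = wtW B u W1 * wtW B a W2 := by
        rw [ewL, ew1, ew2]; ring
      rw [key, e1, e2, one_mul]
    · -- simple cycle: apply consistency
      push_neg at hv hedge
      set l := L.length with hl
      have hend : endW a L = a := endW_eq _ _ _ hw
      set v : Fin (l + 1) → Fin n := fun i => vget a L i with hvdef
      set ee : Fin l → Finset (Fin n) := fun i => (L.get i).1 with heedef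
      have h1 : v (Fin.last l) = v 0 := by
        simp only [hvdef, Fin.val_last, Fin.val_zero, vget_zero]
        rw [← endW_eq_vget, hend]
      have h2 : ∀ i : Fin l, ee i ∈ E ∧ v i.castSucc ∈ ee i ∧ v i.succ ∈ ee i := by
        intro i
        exact isW_get a a L hw i
      have h3 : Function.Injective ee := by
        intro i j hij
        rcases lt_trichotomy i j with h | h | h
        · exact absurd hij (hedge i j h)
        · exact h
        · exact absurd hij.symm (hedge j i h)
      have h4 : Function.Injective (fun i : Fin l => v i.castSucc) := by
        intro i j hij
        simp only [hvdef, Fin.coe_castSucc] at hij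
        rcases lt_trichotomy i j with h | h | h
        · exact absurd hij (hv i j h)
        · exact h
        · exact absurd hij.symm (hv j i h)
      have hc := hcons l v ee h1 h2 h3 h4
      rw [wtW_eq_prod]
      have : ∀ i : Fin l,
          B (vget a L i) (L.get i).1 / B (vget a L (i + 1)) (L.get i).1
            = (B (v i.succ) (ee i) / B (v i.castSucc) (ee i))⁻¹ := by
        intro i
        rw [inv_div]
        rfl
      rw [Finset.prod_congr rfl (fun i _ => this i), Finset.prod_inv_distrib, hc, inv_one]

end Closed

section Potential

variable {n : ℕ} {E : Finset (Finset (Fin n))} {B : Fin n → Finset (Fin n) → ℝ}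

lemma wtW_reverse (a b : Fin n) (L : List (Finset (Fin n) × Fin n)) (h : IsW E a L b) :
    ∃ L', IsW E b L' a ∧ wtW B b L' = (wtW B a L)⁻¹ := by
  induction L generalizing a with
  | nil => exact ⟨[], h ▸ rfl, by simp⟩
  | cons p L ih =>
    obtain ⟨e, c⟩ := p
    obtain ⟨he, ha, hc, hw⟩ := h
    obtain ⟨L', hL', hwt⟩ := ih c hw
    refine ⟨L' ++ [(e, a)], ?_, ?_⟩
    · rw [isW_append_iff, endW_eq _ _ _ hL']
      exact ⟨hL', he, hc, ha, rfl⟩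
    · rw [wtW_append, endW_eq _ _ _ hL', hwt, wtW_cons, wtW_nil, wtW_cons, mul_one,
        mul_inv, inv_div]
      ring

lemma wtW_unique (hBpos : ∀ v e, e ∈ E → v ∈ e → 0 < B v e) (hcons : Consistent E B)
    (a b : Fin n) (L L' : List (Finset (Fin n) × Fin n))
    (h : IsW E a L b) (h' : IsW E a L' b) : wtW B a L = wtW B a L' := by
  obtain ⟨R, hR, hwR⟩ := wtW_reverse (B := B) a b L' h'
  have hclosed : IsW E a (L ++ R) a := by
    rw [isW_append_iff, endW_eq _ _ _ h]
    exact ⟨h, hR⟩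
  have h1 : wtW B a (L ++ R) = 1 := wtW_closed hcons _ _ _ rfl hclosed
  rw [wtW_append, endW_eq _ _ _ h, hwR] at h1
  have hpos : 0 < wtW B a L' := wtW_pos hBpos _ _ _ h'
  field_simp at h1
  exact h1

lemma exists_walk (a b : Fin n) (h : Relation.ReflTransGen (Step E) a b) :
    ∃ L, IsW E a L b := by
  induction h with
  | refl => exact ⟨[], rfl⟩
  | @tail b c h1 h2 ih =>
    obtain ⟨L, hL⟩ := ih
    obtain ⟨e, he, hb, hc⟩ := h2
    refine ⟨L ++ [(e, c)], ?_⟩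
    rw [isW_append_iff, endW_eq _ _ _ hL]
    exact ⟨hL, he, hb, hc, rfl⟩

lemma exists_potential (hn : 0 < n) (hconn : Conn E)
    (hBpos : ∀ v e, e ∈ E → v ∈ e → 0 < B v e) (hcons : Consistent E B) :
    ∃ y : Fin n → ℝ, (∀ v, 0 < y v) ∧
      ∀ e ∈ E, ∀ u ∈ e, ∀ v ∈ e, y u * B u e = y v * B v e := by
  set v0 : Fin n := ⟨0, hn⟩
  choose L hL using fun v => exists_walk (E := E) v0 v (hconn v0 v)
  refine ⟨fun v => wtW B v0 (L v), fun v => wtW_pos hBpos _ _ _ (hL v), ?_⟩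
  intro e he u hu v hv
  have hwalk : IsW E v0 (L u ++ [(e, v)]) v := by
    rw [isW_append_iff, endW_eq _ _ _ (hL u)]
    exact ⟨hL u, he, hu, hv, rfl⟩
  have := wtW_unique hBpos hcons v0 v _ _ hwalk (hL v)
  rw [wtW_append, endW_eq _ _ _ (hL u), wtW_cons, wtW_nil, mul_one] at this
  have hBv : 0 < B v e := hBpos _ _ he hv
  have hBu : 0 < B u e := hBpos _ _ he hu
  field_simp at this ⊢
  linarith [this]

end Potential


/-- a connected hypergraph that is strictly and consistently
α-supernormal has spectral radius strictly greater than `(r-1)! * α^(-1/r)`. -/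
theorem specRad_gt_of_strictly_supernormal (r n : ℕ) (hr : 1 ≤ r)
    (E : Finset (Finset (Fin n))) (hunif : ∀ e ∈ E, e.card = r)
    (hconn : Conn E)
    (B : Fin n → Finset (Fin n) → ℝ)
    (hBpos : ∀ v e, e ∈ E → v ∈ e → 0 < B v e)
    (hBzero : ∀ v e, v ∉ e → B v e = 0)
    (hcons : Consistent E B)
    (α : ℝ) (hα : 0 < α)
    (hsum : ∀ v, 1 ≤ ∑ e ∈ E.filter (fun e => v ∈ e), B v e)
    (hprod : ∀ e ∈ E, ∏ v ∈ e, B v e ≤ α)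
    (hstrict : (∃ v, 1 < ∑ e ∈ E.filter (fun e => v ∈ e), B v e) ∨
      (∃ e ∈ E, ∏ v ∈ e, B v e < α)) :
    (Nat.factorial (r - 1) : ℝ) * α ^ (-(1 : ℝ) / r) < specRad r E := by
  rcases Nat.eq_zero_or_pos n with hn | hn
  · exfalso
    rcases hstrict with ⟨v, -⟩ | ⟨e, heE, -⟩
    · subst hn; exact v.elim0
    · have hcard := hunif e heE
      have he : e = ∅ := by
        subst hn
        exact Finset.eq_empty_of_forall_notMem fun v _ => v.elim0
      rw [he] at hcard
      simp at hcard
      omega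
  obtain ⟨y, hy, hkey⟩ := exists_potential hn hconn hBpos hcons
  have hrne : r ≠ 0 := by omega
  set x : Fin n → ℝ := fun v => y v ^ ((r : ℝ)⁻¹) with hxdef
  have hxpos : ∀ v, 0 < x v := fun v => Real.rpow_pos_of_pos (hy v) _
  have hxr : ∀ v, x v ^ r = y v := fun v => Real.rpow_inv_natCast_pow (hy v).le hrne
  set A := α ^ ((r : ℝ)⁻¹) with hA
  have hApos : 0 < A := Real.rpow_pos_of_pos hα _
  set S := ∑ e ∈ E, ∏ v ∈ e, x v with hSdef
  set T := ∑ v, x v ^ r with hTdef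
  have hTy : T = ∑ v, y v := Finset.sum_congr rfl fun v _ => hxr v
  have hTpos : 0 < T := by
    rw [hTy]
    exact Finset.sum_pos (fun v _ => hy v) ⟨⟨0, hn⟩, Finset.mem_univ _⟩
  set c : Finset (Fin n) → ℝ := fun e => (∑ v ∈ e, y v * B v e) / r with hc
  have hceq : ∀ e ∈ E, ∀ u ∈ e, y u * B u e = c e := by
    intro e he u hu
    have h1 : ∑ v ∈ e, y v * B v e = e.card * (y u * B u e) := by
      rw [Finset.sum_congr rfl (fun v hv => (hkey e he v hv u hu)), Finset.sum_const,
        nsmul_eq_mul]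
    rw [hc]
    simp only []
    rw [h1, hunif e he]
    field_simp
  have hcpos : ∀ e ∈ E, 0 < c e := by
    intro e he
    obtain ⟨u, hu⟩ := Finset.card_pos.mp (by rw [hunif e he]; omega)
    rw [← hceq e he u hu]
    exact mul_pos (hy u) (hBpos u e he hu)
  have hprodx : ∀ e ∈ E, ∏ v ∈ e, x v = (∏ v ∈ e, y v) ^ ((r : ℝ)⁻¹) :=
    fun e _ => Real.finset_prod_rpow e _ (fun v _ => (hy v).le) _
  have hcr : ∀ e ∈ E, c e ^ r = (∏ v ∈ e, y v) * (∏ v ∈ e, B v e) := by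
    intro e he
    rw [← Finset.prod_mul_distrib, ← Finset.prod_congr rfl (fun v hv => (hceq e he v hv).symm),
      Finset.prod_const, hunif e he]
  have hyprodpos : ∀ e : Finset (Fin n), 0 < ∏ v ∈ e, y v :=
    fun e => Finset.prod_pos fun v _ => hy v
  have hcle : ∀ e ∈ E, c e ≤ A * ∏ v ∈ e, x v := by
    intro e he
    have h2 : c e ^ r ≤ (∏ v ∈ e, y v) * α :=
      (hcr e he) ▸ mul_le_mul_of_nonneg_left (hprod e he) (hyprodpos e).le
    have h3 : c e = (c e ^ r) ^ ((r : ℝ)⁻¹) :=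
      (Real.pow_rpow_inv_natCast (hcpos e he).le hrne).symm
    rw [h3]
    calc (c e ^ r) ^ ((r : ℝ)⁻¹) ≤ ((∏ v ∈ e, y v) * α) ^ ((r : ℝ)⁻¹) :=
          Real.rpow_le_rpow (pow_nonneg (hcpos e he).le r) h2 (by positivity)
      _ = A * ∏ v ∈ e, x v := by
          rw [Real.mul_rpow (hyprodpos e).le hα.le, hprodx e he]; ring
  have hclt : ∀ e ∈ E, ∏ v ∈ e, B v e < α → c e < A * ∏ v ∈ e, x v := by
    intro e he hlt
    have h2 : c e ^ r < (∏ v ∈ e, y v) * α :=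
      (hcr e he) ▸ mul_lt_mul_of_pos_left hlt (hyprodpos e)
    have h3 : c e = (c e ^ r) ^ ((r : ℝ)⁻¹) :=
      (Real.pow_rpow_inv_natCast (hcpos e he).le hrne).symm
    rw [h3]
    calc (c e ^ r) ^ ((r : ℝ)⁻¹) < ((∏ v ∈ e, y v) * α) ^ ((r : ℝ)⁻¹) :=
          Real.rpow_lt_rpow (pow_nonneg (hcpos e he).le r) h2 (by positivity)
      _ = A * ∏ v ∈ e, x v := by
          rw [Real.mul_rpow (hyprodpos e).le hα.le, hprodx e he]; ring
  have hU : ∑ v, y v * (∑ e ∈ E.filter (fun e => v ∈ e), B v e) = ∑ e ∈ E, (r : ℝ) * c e := by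
    have h1 : ∀ v : Fin n, y v * (∑ e ∈ E.filter (fun e => v ∈ e), B v e)
        = ∑ e ∈ E, y v * B v e := by
      intro v
      rw [Finset.mul_sum]
      refine Finset.sum_subset (Finset.filter_subset _ _) ?_
      intro e he hne
      have hv : v ∉ e := fun hv => hne (Finset.mem_filter.mpr ⟨he, hv⟩)
      rw [hBzero v e hv, mul_zero]
    rw [Finset.sum_congr rfl (fun v _ => h1 v), Finset.sum_comm]
    refine Finset.sum_congr rfl fun e he => ?_
    have h2 : ∑ v, y v * B v e = ∑ v ∈ e, y v * B v e := by
      symm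
      refine Finset.sum_subset (Finset.subset_univ _) ?_
      intro v _ hv
      rw [hBzero v e hv, mul_zero]
    rw [h2, Finset.sum_congr rfl (fun v hv => hceq e he v hv), Finset.sum_const,
      nsmul_eq_mul, hunif e he]
  have hsum_le : ∑ e ∈ E, (r : ℝ) * c e ≤ (r : ℝ) * A * S := by
    calc ∑ e ∈ E, (r : ℝ) * c e ≤ ∑ e ∈ E, (r : ℝ) * (A * ∏ v ∈ e, x v) :=
          Finset.sum_le_sum fun e he =>
            mul_le_mul_of_nonneg_left (hcle e he) (by positivity)
      _ = (r : ℝ) * A * S := by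
          rw [hSdef, Finset.mul_sum]
          exact Finset.sum_congr rfl fun e _ => by ring
  have hTle : T ≤ ∑ v, y v * (∑ e ∈ E.filter (fun e => v ∈ e), B v e) := by
    rw [hTy]
    exact Finset.sum_le_sum fun v _ => le_mul_of_one_le_right (hy v).le (hsum v)
  have hmain : T < (r : ℝ) * A * S := by
    rcases hstrict with ⟨v0, hv0⟩ | ⟨e0, he0, hlt0⟩
    · have hTlt : T < ∑ v, y v * (∑ e ∈ E.filter (fun e => v ∈ e), B v e) := by
        rw [hTy]
        refine Finset.sum_lt_sum (fun v _ => le_mul_of_one_le_right (hy v).le (hsum v))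
          ⟨v0, Finset.mem_univ _, lt_mul_of_one_lt_right (hy v0) hv0⟩
      calc T < ∑ v, y v * (∑ e ∈ E.filter (fun e => v ∈ e), B v e) := hTlt
        _ = ∑ e ∈ E, (r : ℝ) * c e := hU
        _ ≤ (r : ℝ) * A * S := hsum_le
    · have hlt : ∑ e ∈ E, (r : ℝ) * c e < (r : ℝ) * A * S := by
        calc ∑ e ∈ E, (r : ℝ) * c e < ∑ e ∈ E, (r : ℝ) * (A * ∏ v ∈ e, x v) := by
              refine Finset.sum_lt_sum
                (fun e he => mul_le_mul_of_nonneg_left (hcle e he) (by positivity))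
                ⟨e0, he0, mul_lt_mul_of_pos_left (hclt e0 he0 hlt0) (by positivity)⟩
          _ = (r : ℝ) * A * S := by
              rw [hSdef, Finset.mul_sum]
              exact Finset.sum_congr rfl fun e _ => by ring
      calc T ≤ ∑ v, y v * (∑ e ∈ E.filter (fun e => v ∈ e), B v e) := hTle
        _ = ∑ e ∈ E, (r : ℝ) * c e := hU
        _ < (r : ℝ) * A * S := hlt
  have hxne : x ≠ 0 := by
    intro h
    have h0 := congrFun h ⟨0, hn⟩
    rw [Pi.zero_apply] at h0
    exact absurd h0 (ne_of_gt (hxpos _))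
  have hmem : (Nat.factorial r : ℝ) * S / T ∈ {ρ : ℝ | ∃ x : Fin n → ℝ,
      (∀ v, 0 ≤ x v) ∧ x ≠ 0 ∧
      ρ = (Nat.factorial r : ℝ) * (∑ e ∈ E, ∏ v ∈ e, x v) / (∑ v, x v ^ r)} :=
    ⟨x, fun v => (hxpos v).le, hxne, by rw [hSdef, hTdef]⟩
  have hbdd : BddAbove {ρ : ℝ | ∃ x : Fin n → ℝ, (∀ v, 0 ≤ x v) ∧ x ≠ 0 ∧
      ρ = (Nat.factorial r : ℝ) * (∑ e ∈ E, ∏ v ∈ e, x v) / (∑ v, x v ^ r)} := by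
    refine ⟨(Nat.factorial r : ℝ) * E.card, ?_⟩
    rintro ρ ⟨z, hz0, hzne, rfl⟩
    obtain ⟨u, -, hu⟩ := Finset.exists_max_image Finset.univ z ⟨⟨0, hn⟩, Finset.mem_univ _⟩
    obtain ⟨w, hw⟩ := Function.ne_iff.mp hzne
    have hzw : 0 < z w := (hz0 w).lt_of_ne' (by simpa using hw)
    have hzu : 0 < z u := lt_of_lt_of_le hzw (hu w (Finset.mem_univ _))
    have hT' : 0 < ∑ v, z v ^ r :=
      Finset.sum_pos' (fun i _ => pow_nonneg (hz0 i) r) ⟨u, Finset.mem_univ _, pow_pos hzu r⟩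
    rw [div_le_iff₀ hT']
    have hS' : (∑ e ∈ E, ∏ v ∈ e, z v) ≤ (E.card : ℝ) * z u ^ r := by
      calc ∑ e ∈ E, ∏ v ∈ e, z v ≤ ∑ e ∈ E, z u ^ r := by
            refine Finset.sum_le_sum fun e he => ?_
            calc ∏ v ∈ e, z v ≤ ∏ v ∈ e, z u :=
                  Finset.prod_le_prod (fun v _ => hz0 v) (fun v _ => hu v (Finset.mem_univ _))
              _ = z u ^ r := by rw [Finset.prod_const, hunif e he]
        _ = (E.card : ℝ) * z u ^ r := by rw [Finset.sum_const, nsmul_eq_mul]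
    have hTz : z u ^ r ≤ ∑ v, z v ^ r :=
      Finset.single_le_sum (fun i _ => pow_nonneg (hz0 i) r) (Finset.mem_univ u)
    have hf : (0 : ℝ) ≤ (Nat.factorial r : ℝ) := Nat.cast_nonneg _
    have hEc : (0 : ℝ) ≤ (E.card : ℝ) := Nat.cast_nonneg _
    nlinarith [mul_le_mul_of_nonneg_left hS' hf,
      mul_le_mul_of_nonneg_left hTz (mul_nonneg hf hEc)]
  have hαexp : α ^ (-(1 : ℝ) / r) = A⁻¹ := by
    rw [neg_div, one_div, Real.rpow_neg hα.le, hA]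
  have hfact : (Nat.factorial r : ℝ) = (r : ℝ) * (Nat.factorial (r - 1) : ℝ) := by
    rw [← Nat.mul_factorial_pred (by omega : r ≠ 0)]
    push_cast
    ring
  have hfpos : (0 : ℝ) < (Nat.factorial (r - 1) : ℝ) := by positivity
  have hfinal : (Nat.factorial (r - 1) : ℝ) * α ^ (-(1 : ℝ) / r)
      < (Nat.factorial r : ℝ) * S / T := by
    rw [hαexp, lt_div_iff₀ hTpos]
    calc (Nat.factorial (r - 1) : ℝ) * A⁻¹ * T
        < (Nat.factorial (r - 1) : ℝ) * A⁻¹ * ((r : ℝ) * A * S) := by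
          exact mul_lt_mul_of_pos_left hmain (by positivity)
      _ = (Nat.factorial r : ℝ) * S := by
          rw [hfact]
          field_simp
  exact lt_of_lt_of_le hfinal (le_csSup hbdd hmem)
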